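/- arXiv:2004.05678 — 6 statements merged into one kernel-verified Lean document; each statement's English description precedes it below -/
import Mathlib

section
/- Fix ξ₁, ξ₂ > 0. Every interval [2πn/(ξ₁/2 + ξ₂), 2π(n+1)/(ξ₁/2 + ξ₂)] for n ∈ ℤ contains at least one solution γ of the equation 3 sin((ξ₁/2 + ξ₂)γ) + sin((ξ₁/2 − ξ₂)γ) = 0. -/
theorem stmt_6 (ξ₁ ξ₂ : ℝ) (hξ₁ : 0 < ξ₁) (hξ₂ : 0 < ξ₂) (n : ℤ) :
    ∃ γ ∈ Set.Icc (2 * Real.pi * n / (ξ₁ / 2 + ξ₂)) (2 * Real.pi * (n + 1) / (ξ₁ / 2 + ξ₂)),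
      3 * Real.sin ((ξ₁ / 2 + ξ₂) * γ) + Real.sin ((ξ₁ / 2 - ξ₂) * γ) = 0 := by
  set a := ξ₁ / 2 + ξ₂ with ha_def
  have ha : 0 < a := by positivity
  have hπ := Real.pi_pos
  set f : ℝ → ℝ := fun γ => 3 * Real.sin (a * γ) + Real.sin ((ξ₁ / 2 - ξ₂) * γ) with hf
  set p : ℝ := (Real.pi / 2 + 2 * Real.pi * n) / a with hp
  set q : ℝ := (3 * Real.pi / 2 + 2 * Real.pi * n) / a with hq
  have hap : a * p = Real.pi / 2 + 2 * Real.pi * n := by rw [hp]; field_simp [ha.ne']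
  have haq : a * q = 3 * Real.pi / 2 + 2 * Real.pi * n := by rw [hq]; field_simp [ha.ne']
  have hsp : Real.sin (a * p) = 1 := by
    rw [hap]
    have : Real.pi / 2 + 2 * Real.pi * n = Real.pi / 2 + n * (2 * Real.pi) := by ring
    rw [this, Real.sin_add_int_mul_two_pi, Real.sin_pi_div_two]
  have hsq : Real.sin (a * q) = -1 := by
    rw [haq]
    have : 3 * Real.pi / 2 + 2 * Real.pi * n = 3 * Real.pi / 2 + n * (2 * Real.pi) := by ring
    rw [this, Real.sin_add_int_mul_two_pi]
    have : (3:ℝ) * Real.pi / 2 = Real.pi + Real.pi / 2 := by ring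
    rw [this]
    rw [add_comm, Real.sin_add_pi, Real.sin_pi_div_two]
  have hfp : 0 < f p := by
    have := Real.neg_one_le_sin ((ξ₁ / 2 - ξ₂) * p)
    simp only [hf, hsp]; linarith
  have hfq : f q < 0 := by
    have := Real.sin_le_one ((ξ₁ / 2 - ξ₂) * q)
    simp only [hf, hsq]; linarith
  have hpq : p ≤ q := by
    apply div_le_div_of_nonneg_right ?_ ha.le |>.trans_eq rfl
    linarith
  have hcont : ContinuousOn f (Set.Icc p q) := by fun_prop
  have h0 : (0:ℝ) ∈ Set.Icc (f q) (f p) := ⟨le_of_lt hfq, le_of_lt hfp⟩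
  have := intermediate_value_Icc' hpq hcont h0
  obtain ⟨γ, hγ, hγ0⟩ := this
  refine ⟨γ, ⟨?_, ?_⟩, hγ0⟩
  · calc 2 * Real.pi * n / a ≤ p := by
          apply div_le_div_of_nonneg_right ?_ ha.le |>.trans_eq rfl
          linarith
        _ ≤ γ := hγ.1
  · calc γ ≤ q := hγ.2
        _ ≤ 2 * Real.pi * (n + 1) / a := by
          apply div_le_div_of_nonneg_right ?_ ha.le |>.trans_eq rfl
          linarith
end

section
/- Fix ξ₁, ξ₂ > 0. All real zeros of f(γ) = 3 sin((ξ₁/2 + ξ₂)γ) + sin((ξ₁/2 − ξ₂)γ) are simple, i.e., if f(γ) = 0 then f'(γ) ≠ 0. -/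
theorem stmt_7 (ξ₁ ξ₂ : ℝ) (hξ₁ : 0 < ξ₁) (hξ₂ : 0 < ξ₂) (γ : ℝ)
    (hγ : 3 * Real.sin ((ξ₁ / 2 + ξ₂) * γ) + Real.sin ((ξ₁ / 2 - ξ₂) * γ) = 0) :
    deriv (fun t : ℝ => 3 * Real.sin ((ξ₁ / 2 + ξ₂) * t) + Real.sin ((ξ₁ / 2 - ξ₂) * t)) γ ≠ 0 := by
  set a := ξ₁ / 2 + ξ₂ with ha_def
  set b := ξ₁ / 2 - ξ₂ with hb_def
  have h1 : HasDerivAt (fun t : ℝ => Real.sin (a * t)) (Real.cos (a * γ) * a) γ := by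
    simpa [Function.comp_def] using (Real.hasDerivAt_sin (a * γ)).comp γ ((hasDerivAt_id γ).const_mul a)
  have h2 : HasDerivAt (fun t : ℝ => Real.sin (b * t)) (Real.cos (b * γ) * b) γ := by
    simpa [Function.comp_def] using (Real.hasDerivAt_sin (b * γ)).comp γ ((hasDerivAt_id γ).const_mul b)
  have hD : deriv (fun t : ℝ => 3 * Real.sin (a * t) + Real.sin (b * t)) γ
      = 3 * (Real.cos (a * γ) * a) + Real.cos (b * γ) * b :=
    ((h1.const_mul 3).add h2).deriv
  rw [hD]
  intro hd
  have hpa : 0 < a := by simp only [ha_def]; linarith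
  have hb1 : b < a := by simp only [ha_def, hb_def]; linarith
  have hb2 : -a < b := by simp only [ha_def, hb_def]; linarith
  have e1 : Real.sin (b * γ) = -(3 * Real.sin (a * γ)) := by linarith
  have e2 : Real.cos (b * γ) * b = -(3 * (Real.cos (a * γ) * a)) := by linarith
  have hbsq : b ^ 2 ≤ a ^ 2 := by nlinarith
  have key : b ^ 2 * Real.cos (b * γ) ^ 2 = 9 * a ^ 2 * Real.cos (a * γ) ^ 2 := by
    linear_combination (Real.cos (b * γ) * b - 3 * (Real.cos (a * γ) * a)) * e2
  have key3 : Real.sin (b * γ) ^ 2 = 9 * Real.sin (a * γ) ^ 2 := by rw [e1]; ring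
  have hs1 := Real.sin_sq_add_cos_sq (a * γ)
  have hs2 := Real.sin_sq_add_cos_sq (b * γ)
  have c1 : 9 * a ^ 2 ≤ a ^ 2 := by
    nlinarith [key, key3, hs1, hs2, hbsq, sq_nonneg (Real.cos (b * γ)),
      sq_nonneg (Real.sin (b * γ)), mul_pos hpa hpa,
      mul_le_mul_of_nonneg_right hbsq (sq_nonneg (Real.cos (b * γ)))]
  nlinarith [mul_pos hpa hpa]
end

section
/- Fix ξ₁, ξ₂ > 0. The set of real zeros of f(γ) = 3 sin((ξ₁/2 + ξ₂)γ) + sin((ξ₁/2 − ξ₂)γ) is uniformly discrete: there exists ρ > 0 such that any two distinct zeros are at distance at least ρ. -/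
open Real

private lemma cos_lip (x y : ℝ) : |Real.cos x - Real.cos y| ≤ |x - y| := by
  rw [Real.cos_sub_cos]
  have h1 : |Real.sin ((x + y) / 2)| ≤ 1 := Real.abs_sin_le_one _
  have h2 : |Real.sin ((x - y) / 2)| ≤ |(x - y) / 2| := Real.abs_sin_le_abs
  calc |(-2) * Real.sin ((x + y) / 2) * Real.sin ((x - y) / 2)|
      = 2 * |Real.sin ((x + y) / 2)| * |Real.sin ((x - y) / 2)| := by
        rw [abs_mul, abs_mul]; norm_num
    _ ≤ 2 * 1 * |(x - y) / 2| := by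
        apply mul_le_mul _ h2 (abs_nonneg _) (by positivity)
        nlinarith [abs_nonneg (Real.sin ((x + y) / 2))]
    _ = |x - y| := by rw [abs_div, abs_two]; ring

private lemma key (a b : ℝ) (ha : 0 < a) (hb : |b| ≤ a) (γ₁ γ₂ : ℝ) (hlt : γ₁ < γ₂)
    (h1 : 3 * Real.sin (a * γ₁) + Real.sin (b * γ₁) = 0)
    (h2 : 3 * Real.sin (a * γ₂) + Real.sin (b * γ₂) = 0) :
    17 / (40 * a) ≤ |γ₁ - γ₂| := by
  set F : ℝ → ℝ := fun x => 3 * Real.sin (a * x) + Real.sin (b * x) with hF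
  set F' : ℝ → ℝ := fun x => 3 * a * Real.cos (a * x) + b * Real.cos (b * x) with hF'
  have hderiv : ∀ x, HasDerivAt F (F' x) x := by
    intro x
    have hs1 : HasDerivAt (fun y => Real.sin (a * y)) (Real.cos (a * x) * (a * 1)) x :=
      (Real.hasDerivAt_sin (a * x)).comp x ((hasDerivAt_id x).const_mul a)
    have hs2 : HasDerivAt (fun y => Real.sin (b * y)) (Real.cos (b * x) * (b * 1)) x :=
      (Real.hasDerivAt_sin (b * x)).comp x ((hasDerivAt_id x).const_mul b)
    have : HasDerivAt F (3 * (Real.cos (a * x) * (a * 1)) + Real.cos (b * x) * (b * 1)) x :=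
      (hs1.const_mul 3).add hs2
    convert this using 1
    simp [hF']; ring
  -- Lipschitz bound on F'
  have hlip : ∀ x y : ℝ, |F' x - F' y| ≤ 4 * a ^ 2 * |x - y| := by
    intro x y
    have e : F' x - F' y = 3 * a * (Real.cos (a * x) - Real.cos (a * y))
        + b * (Real.cos (b * x) - Real.cos (b * y)) := by simp [hF']; ring
    have c1 := cos_lip (a * x) (a * y)
    have c2 := cos_lip (b * x) (b * y)
    have e1 : |a * x - a * y| = a * |x - y| := by
      rw [← mul_sub, abs_mul, abs_of_pos ha]
    have e2 : |b * x - b * y| = |b| * |x - y| := by rw [← mul_sub, abs_mul]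
    rw [e1] at c1; rw [e2] at c2
    calc |F' x - F' y| ≤ |3 * a * (Real.cos (a * x) - Real.cos (a * y))|
          + |b * (Real.cos (b * x) - Real.cos (b * y))| := by rw [e]; exact abs_add_le _ _
      _ = 3 * a * |Real.cos (a * x) - Real.cos (a * y)|
          + |b| * |Real.cos (b * x) - Real.cos (b * y)| := by
            rw [abs_mul, abs_mul, abs_mul, abs_of_pos ha]; norm_num
      _ ≤ 3 * a * (a * |x - y|) + |b| * (|b| * |x - y|) := by
            gcongr
      _ ≤ 4 * a ^ 2 * |x - y| := by
            have hbb : |b| * |b| ≤ a * a := mul_le_mul hb hb (abs_nonneg b) ha.le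
            nlinarith [mul_le_mul_of_nonneg_right hbb (abs_nonneg (x - y))]
  -- lower bound on |F'| at a zero
  have hlow : ∀ γ : ℝ, F γ = 0 → 17 / 10 * a ≤ |F' γ| := by
    intro γ hγ
    have hsin : 3 * |Real.sin (a * γ)| ≤ 1 := by
      have : Real.sin (b * γ) = -(3 * Real.sin (a * γ)) := by
        have := hγ; simp only [hF] at this; linarith
      have hb1 : |Real.sin (b * γ)| ≤ 1 := Real.abs_sin_le_one _
      rw [this, abs_neg, abs_mul] at hb1
      simpa using hb1
    have hcos2 : (9:ℝ)/10 ≤ |Real.cos (a * γ)| := by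
      have hsq : Real.sin (a * γ) ^ 2 + Real.cos (a * γ) ^ 2 = 1 := Real.sin_sq_add_cos_sq _
      nlinarith [sq_abs (Real.cos (a * γ)), sq_abs (Real.sin (a * γ)),
        abs_nonneg (Real.cos (a * γ)), abs_nonneg (Real.sin (a * γ))]
    have hbc : |b * Real.cos (b * γ)| ≤ a := by
      rw [abs_mul]
      calc |b| * |Real.cos (b * γ)| ≤ a * 1 :=
        mul_le_mul hb (Real.abs_cos_le_one _) (abs_nonneg _) (le_of_lt ha)
      _ = a := mul_one a
    have h3 : 3 * a * |Real.cos (a * γ)| ≤ |F' γ| + a := by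
      have : (3 * a * Real.cos (a * γ)) = F' γ - b * Real.cos (b * γ) := by simp [hF']
      calc 3 * a * |Real.cos (a * γ)| = |3 * a * Real.cos (a * γ)| := by
            rw [abs_mul, abs_of_pos (by linarith : (0:ℝ) < 3 * a)]
        _ = |F' γ - b * Real.cos (b * γ)| := by rw [this]
        _ ≤ |F' γ| + |b * Real.cos (b * γ)| := abs_sub _ _
        _ ≤ |F' γ| + a := by linarith
    nlinarith
  -- MVT
  obtain ⟨c, hc, hceq⟩ := exists_hasDerivAt_eq_slope F F' hlt
    (fun x _ => (hderiv x).continuousAt.continuousWithinAt)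
    (fun x _ => hderiv x)
  have hF1 : F γ₁ = 0 := h1
  have hF2 : F γ₂ = 0 := h2
  have hc0 : F' c = 0 := by
    rw [hceq, hF1, hF2]; simp
  have hlow1 := hlow γ₁ hF1
  have hlipc := hlip γ₁ c
  rw [hc0] at hlipc
  simp only [sub_zero] at hlipc
  have hcd : |γ₁ - c| ≤ |γ₁ - γ₂| := by
    rw [abs_of_nonpos (by linarith [hc.1] : γ₁ - c ≤ 0),
      abs_of_nonpos (by linarith : γ₁ - γ₂ ≤ 0)]
    linarith [hc.2]
  have : 17 / 10 * a ≤ 4 * a ^ 2 * |γ₁ - γ₂| := by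
    calc 17 / 10 * a ≤ |F' γ₁| := hlow1
      _ ≤ 4 * a ^ 2 * |γ₁ - c| := hlipc
      _ ≤ 4 * a ^ 2 * |γ₁ - γ₂| := by gcongr
  rw [div_le_iff₀ (by positivity)]
  nlinarith [abs_nonneg (γ₁ - γ₂)]

theorem stmt_8 (ξ₁ ξ₂ : ℝ) (hξ₁ : 0 < ξ₁) (hξ₂ : 0 < ξ₂) :
    ∃ ρ > (0 : ℝ), ∀ γ₁ γ₂ : ℝ,
      3 * Real.sin ((ξ₁ / 2 + ξ₂) * γ₁) + Real.sin ((ξ₁ / 2 - ξ₂) * γ₁) = 0 →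
      3 * Real.sin ((ξ₁ / 2 + ξ₂) * γ₂) + Real.sin ((ξ₁ / 2 - ξ₂) * γ₂) = 0 →
      γ₁ ≠ γ₂ → ρ ≤ |γ₁ - γ₂| := by
  set a := ξ₁ / 2 + ξ₂ with ha_def
  set b := ξ₁ / 2 - ξ₂ with hb_def
  have ha : 0 < a := by simp [ha_def]; linarith
  have hb : |b| ≤ a := abs_le.mpr ⟨by simp [ha_def, hb_def]; linarith, by simp [ha_def, hb_def]; linarith⟩
  refine ⟨17 / (40 * a), by positivity, fun γ₁ γ₂ h1 h2 hne => ?_⟩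
  rcases lt_or_gt_of_ne hne with h | h
  · exact key a b ha hb γ₁ γ₂ h h1 h2
  · rw [abs_sub_comm]
    exact key a b ha hb γ₂ γ₁ h h2 h1
end

section
/- Let P be a polynomial in n complex variables with P(0) ≠ 0 and nonvanishing on the closed unit polydisk, and define arg P(z) by continuous variation along the path s ↦ P(sz), s ∈ [0,1], starting from arg P(0) ∈ (−π, π]. Then for every z in the closed unit polydisk, |arg P(z) − arg P(0)| ≤ π · deg P. -/
open Complex Polynomial

section Aux

lemma aux_eval (n : ℕ) (P : MvPolynomial (Fin n) ℂ) (z : Fin n → ℂ) (s : ℂ) :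
    (MvPolynomial.eval₂ Polynomial.C (fun j => Polynomial.C (z j) * Polynomial.X) P).eval s
      = MvPolynomial.eval (fun j => s * z j) P := by
  rw [show ((MvPolynomial.eval₂ Polynomial.C (fun j => Polynomial.C (z j) * Polynomial.X) P).eval s)
    = (Polynomial.evalRingHom s) (MvPolynomial.eval₂ Polynomial.C (fun j => Polynomial.C (z j) * Polynomial.X) P) from rfl,
    MvPolynomial.eval₂_comp_left]
  have h1 : (Polynomial.evalRingHom s).comp Polynomial.C = RingHom.id ℂ := by
    ext c; simp
  rw [h1]
  have h2 : ((Polynomial.evalRingHom s) ∘ fun j => Polynomial.C (z j) * Polynomial.X)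
      = fun j => s * z j := by
    funext j
    simp only [Function.comp_apply, Polynomial.coe_evalRingHom, Polynomial.eval_mul,
      Polynomial.eval_C, Polynomial.eval_X]
    ring
  rw [h2, MvPolynomial.eval]
  rfl

lemma aux_deg (n : ℕ) (P : MvPolynomial (Fin n) ℂ) (z : Fin n → ℂ) :
    (MvPolynomial.eval₂ Polynomial.C (fun j => Polynomial.C (z j) * Polynomial.X) P).natDegree
      ≤ P.totalDegree := by
  rw [MvPolynomial.eval₂_eq]
  apply Polynomial.natDegree_sum_le_of_forall_le
  intro d hd
  refine le_trans (Polynomial.natDegree_C_mul_le _ _)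
    (le_trans (Polynomial.natDegree_prod_le _ _) ?_)
  refine le_trans (Finset.sum_le_sum (g := fun i => d i) fun i _ => ?_) ?_
  · calc ((C (z i) * X : Polynomial ℂ) ^ d i).natDegree
        ≤ d i * (C (z i) * X : Polynomial ℂ).natDegree := natDegree_pow_le
      _ ≤ d i * 1 := by
          gcongr
          exact le_trans (natDegree_C_mul_le _ _) (by simp)
      _ = d i := mul_one _
  · exact MvPolynomial.le_totalDegree hd

lemma aux_arg (r : ℂ) (hr : ∀ s ∈ Set.Icc (0:ℝ) 1, (s:ℂ) ≠ r) :
    ContinuousOn (fun s : ℝ => Complex.arg ((s:ℂ) - r)) (Set.Icc 0 1) ∧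
    |Complex.arg (((1:ℝ):ℂ) - r) - Complex.arg (((0:ℝ):ℂ) - r)| ≤ Real.pi := by
  by_cases him : r.im = 0
  · have hre : r.re < 0 ∨ 1 < r.re := by
      by_contra h
      push_neg at h
      exact hr r.re ⟨h.1, h.2⟩ (by apply Complex.ext <;> simp [him])
    have key : ∀ s : ℝ, (s:ℂ) - r = ((s - r.re : ℝ) : ℂ) := by
      intro s; apply Complex.ext <;> simp [him]
    rcases hre with h | h
    · have hval : ∀ s ∈ Set.Icc (0:ℝ) 1, Complex.arg ((s:ℂ) - r) = 0 := by
        intro s hs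
        rw [key s, Complex.arg_ofReal_of_nonneg (by linarith [hs.1])]
      constructor
      · exact (continuousOn_const (c := (0:ℝ))).congr hval
      · rw [hval 1 ⟨zero_le_one, le_refl 1⟩, hval 0 ⟨le_refl 0, zero_le_one⟩]
        simpa using Real.pi_pos.le
    · have hval : ∀ s ∈ Set.Icc (0:ℝ) 1, Complex.arg ((s:ℂ) - r) = Real.pi := by
        intro s hs
        rw [key s, Complex.arg_ofReal_of_neg (by linarith [hs.2])]
      constructor
      · exact (continuousOn_const (c := Real.pi)).congr hval
      · rw [hval 1 ⟨zero_le_one, le_refl 1⟩, hval 0 ⟨le_refl 0, zero_le_one⟩]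
        simpa using Real.pi_pos.le
  · have hcont : ContinuousOn (fun s : ℝ => Complex.arg ((s:ℂ) - r)) (Set.Icc 0 1) := by
      intro s _
      apply ContinuousAt.continuousWithinAt
      exact ContinuousAt.comp (Complex.continuousAt_arg (Or.inr (by simp [him])))
        ((Complex.continuous_ofReal.sub continuous_const).continuousAt)
    refine ⟨hcont, ?_⟩
    have him1 : (((1:ℝ):ℂ) - r).im ≠ 0 := by simp [him]
    have him0 : (((0:ℝ):ℂ) - r).im ≠ 0 := by simp [him]
    rcases lt_or_gt_of_ne him with hneg | hpos
    · have h1 : 0 ≤ Complex.arg (((1:ℝ):ℂ) - r) := Complex.arg_nonneg_iff.2 (by simp; linarith)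
      have h0 : 0 ≤ Complex.arg (((0:ℝ):ℂ) - r) := Complex.arg_nonneg_iff.2 (by simp; linarith)
      have h1' : Complex.arg (((1:ℝ):ℂ) - r) < Real.pi := Complex.arg_lt_pi_iff.2 (Or.inr him1)
      have h0' : Complex.arg (((0:ℝ):ℂ) - r) < Real.pi := Complex.arg_lt_pi_iff.2 (Or.inr him0)
      rw [abs_sub_le_iff]; constructor <;> linarith
    · have h1 : Complex.arg (((1:ℝ):ℂ) - r) < 0 := Complex.arg_neg_iff.2 (by simp; linarith)
      have h0 : Complex.arg (((0:ℝ):ℂ) - r) < 0 := Complex.arg_neg_iff.2 (by simp; linarith)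
      have h1' := Complex.neg_pi_lt_arg (((1:ℝ):ℂ) - r)
      have h0' := Complex.neg_pi_lt_arg (((0:ℝ):ℂ) - r)
      rw [abs_sub_le_iff]; constructor <;> linarith

lemma aux_prod (s : ℂ) (m : Multiset ℂ) :
    (m.map (fun r => s - r)).prod =
      (((m.map (fun r => ‖s - r‖)).prod : ℝ) : ℂ) *
        Complex.exp (Complex.I * (((m.map (fun r => Complex.arg (s - r))).sum : ℝ) : ℂ)) := by
  induction m using Multiset.induction_on with
  | empty => simp
  | cons a m ih =>
    simp only [Multiset.map_cons, Multiset.prod_cons, Multiset.sum_cons, ih]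
    rw [show ((Complex.arg (s - a) + (m.map (fun r => Complex.arg (s - r))).sum : ℝ) : ℂ)
        = (Complex.arg (s - a) : ℂ) + ((m.map (fun r => Complex.arg (s - r))).sum : ℝ) by
      push_cast; ring]
    rw [mul_add, Complex.exp_add, Complex.ofReal_mul]
    have h2 := Complex.norm_mul_exp_arg_mul_I (s - a)
    rw [mul_comm ((Complex.arg (s - a) : ℂ)) Complex.I] at h2
    conv_lhs => rw [← h2]
    exact mul_mul_mul_comm (G := ℂ) _ _ _ _

lemma aux_cont (m : Multiset ℂ)
    (h : ∀ r ∈ m, ContinuousOn (fun s : ℝ => Complex.arg ((s:ℂ) - r)) (Set.Icc 0 1)) :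
    ContinuousOn (fun s : ℝ => (m.map (fun r => Complex.arg ((s:ℂ) - r))).sum)
      (Set.Icc 0 1) := by
  induction m using Multiset.induction_on with
  | empty => simp; exact continuousOn_const
  | cons a m ih =>
    simp only [Multiset.map_cons, Multiset.sum_cons]
    exact (h a (Multiset.mem_cons_self a m)).add
      (ih fun r hr => h r (Multiset.mem_cons_of_mem hr))

lemma aux_sum_bound (m : Multiset ℂ) (f : ℂ → ℝ) (h : ∀ r ∈ m, |f r| ≤ Real.pi) :
    |(m.map f).sum| ≤ Real.pi * (Multiset.card m) := by
  induction m using Multiset.induction_on with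
  | empty => simp
  | cons a m ih =>
    simp only [Multiset.map_cons, Multiset.sum_cons, Multiset.card_cons]
    calc |f a + (m.map f).sum| ≤ |f a| + |(m.map f).sum| := abs_add_le _ _
      _ ≤ Real.pi + Real.pi * (Multiset.card m) :=
          add_le_add (h a (Multiset.mem_cons_self a m))
            (ih fun r hr => h r (Multiset.mem_cons_of_mem hr))
      _ = Real.pi * ((Multiset.card m + 1 : ℕ) : ℝ) := by push_cast; ring

end Aux

theorem stmt_10 (n : ℕ) (P : MvPolynomial (Fin n) ℂ)
    (hP : ∀ z : Fin n → ℂ, (∀ j, ‖z j‖ ≤ 1) → MvPolynomial.eval z P ≠ 0)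
    (z : Fin n → ℂ) (hz : ∀ j, ‖z j‖ ≤ 1)
    (θ : ℝ → ℝ) (hθcont : ContinuousOn θ (Set.Icc 0 1))
    (hθ0 : θ 0 = Complex.arg (MvPolynomial.eval (fun _ => (0 : ℂ)) P))
    (hθ : ∀ s ∈ Set.Icc (0 : ℝ) 1,
      MvPolynomial.eval (fun j => (s : ℂ) * z j) P =
        (‖MvPolynomial.eval (fun j => (s : ℂ) * z j) P‖ : ℂ) *
          Complex.exp (Complex.I * θ s)) :
    |θ 1 - θ 0| ≤ Real.pi * P.totalDegree := by
  set q : Polynomial ℂ :=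
    MvPolynomial.eval₂ Polynomial.C (fun j => Polynomial.C (z j) * Polynomial.X) P with hq
  have heval : ∀ s : ℂ, q.eval s = MvPolynomial.eval (fun j => s * z j) P :=
    fun s => aux_eval n P z s
  have hF : ∀ s ∈ Set.Icc (0:ℝ) 1, q.eval (s:ℂ) ≠ 0 := by
    intro s hs
    rw [heval]
    apply hP
    intro j
    rw [norm_mul, Complex.norm_of_nonneg hs.1]
    exact mul_le_one₀ hs.2 (norm_nonneg _) (hz j)
  have hroots : ∀ r ∈ q.roots, ∀ s ∈ Set.Icc (0:ℝ) 1, (s:ℂ) ≠ r := by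
    intro r hr s hs heq
    have h0 := Polynomial.isRoot_of_mem_roots hr
    rw [← heq] at h0
    exact hF s hs h0
  have hcard : Multiset.card q.roots = q.natDegree :=
    Polynomial.splits_iff_card_roots.mp (IsAlgClosed.splits q)
  have hsplit := (Polynomial.C_leadingCoeff_mul_prod_multiset_X_sub_C hcard).symm
  -- the continuous argument candidate
  set Φ : ℝ → ℝ := fun s =>
    Complex.arg q.leadingCoeff + (q.roots.map (fun r => Complex.arg ((s:ℂ) - r))).sum with hΦ
  have hΦcont : ContinuousOn Φ (Set.Icc 0 1) :=
    continuousOn_const.add (aux_cont _ fun r hr => (aux_arg r (hroots r hr)).1)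
  -- key exponential identity
  have key : ∀ s ∈ Set.Icc (0:ℝ) 1,
      Complex.exp (Complex.I * (θ s : ℂ)) = Complex.exp (Complex.I * (Φ s : ℂ)) := by
    intro s hs
    have h1 : q.eval (s:ℂ) =
        ((‖q.leadingCoeff‖ *
          (q.roots.map (fun r => ‖(s:ℂ) - r‖)).prod : ℝ) : ℂ) *
          Complex.exp (Complex.I * ((Φ s : ℝ) : ℂ)) := by
      conv_lhs => rw [hsplit]
      rw [show ((Polynomial.C q.leadingCoeff *
            (q.roots.map fun a => Polynomial.X - Polynomial.C a).prod).eval (s:ℂ))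
          = q.leadingCoeff * (q.roots.map (fun a => (s:ℂ) - a)).prod by
        simp [Polynomial.eval_multiset_prod, Multiset.map_map, Function.comp]]
      rw [aux_prod]
      have h2 := Complex.norm_mul_exp_arg_mul_I q.leadingCoeff
      rw [mul_comm ((Complex.arg q.leadingCoeff : ℂ)) Complex.I] at h2
      conv_lhs => rw [← h2]
      rw [hΦ]
      push_cast
      rw [mul_add, Complex.exp_add]
      ring
    have hA : (0:ℝ) ≤ ‖q.leadingCoeff‖ *
        (q.roots.map (fun r => ‖(s:ℂ) - r‖)).prod := by
      apply mul_nonneg (norm_nonneg _)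
      apply Multiset.prod_nonneg
      intro x hx
      obtain ⟨r, _, rfl⟩ := Multiset.mem_map.mp hx
      exact norm_nonneg _
    have habs : ‖q.eval (s:ℂ)‖ =
        ‖q.leadingCoeff‖ * (q.roots.map (fun r => ‖(s:ℂ) - r‖)).prod := by
      rw [h1, norm_mul, Complex.norm_of_nonneg hA,
        mul_comm Complex.I ((Φ s : ℝ) : ℂ), Complex.norm_exp_ofReal_mul_I, mul_one]
    have h3 := hθ s hs
    rw [← heval (s:ℂ)] at h3
    rw [habs] at h3
    have hAne : ((‖q.leadingCoeff‖ *
        (q.roots.map (fun r => ‖(s:ℂ) - r‖)).prod : ℝ) : ℂ) ≠ 0 := by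
      intro h0
      apply hF s hs
      rw [h1, h0, zero_mul]
    exact mul_left_cancel₀ hAne (h3.symm.trans h1)
  -- θ and Φ differ by a constant multiple of 2π
  have hint : ∀ s ∈ Set.Icc (0:ℝ) 1, ∃ k : ℤ, θ s = Φ s + 2 * Real.pi * k := by
    intro s hs
    obtain ⟨k, hk⟩ := Complex.exp_eq_exp_iff_exists_int.mp (key s hs)
    refine ⟨k, ?_⟩
    have h := congrArg Complex.im hk
    simp [Complex.mul_im, Complex.add_im] at h
    linarith
  have hΦθ : θ 1 - θ 0 = Φ 1 - Φ 0 := by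
    obtain ⟨k0, hk0⟩ := hint 0 ⟨le_refl 0, zero_le_one⟩
    obtain ⟨k1, hk1⟩ := hint 1 ⟨zero_le_one, le_refl 1⟩
    have hkk : k1 = k0 := by
      by_contra hne
      set g : ℝ → ℝ := fun s => (θ s - Φ s) / (2 * Real.pi) with hg
      have hgcont : ContinuousOn g (Set.Icc 0 1) :=
        (hθcont.sub hΦcont).div_const _
      have hg0 : g 0 = k0 := by
        rw [hg]; simp only []; rw [hk0]; field_simp; ring
      have hg1 : g 1 = k1 := by
        rw [hg]; simp only []; rw [hk1]; field_simp; ring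
      have hgint : ∀ s ∈ Set.Icc (0:ℝ) 1, ∃ k : ℤ, g s = k := by
        intro s hs
        obtain ⟨k, hk⟩ := hint s hs
        refine ⟨k, ?_⟩
        rw [hg]; simp only []; rw [hk]; field_simp; ring
      have hpi := Real.pi_pos
      rcases lt_or_gt_of_ne hne with hlt | hlt
      · -- k1 < k0 : g 1 < g 0
        have hy : ((k1:ℝ) + 1/2) ∈ Set.Icc (g 1) (g 0) := by
          rw [hg0, hg1]
          constructor
          · linarith
          · have : (k1:ℝ) + 1 ≤ k0 := by exact_mod_cast hlt
            linarith
        obtain ⟨s, hs, hgs⟩ := intermediate_value_Icc' zero_le_one hgcont hy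
        obtain ⟨k, hk⟩ := hgint s hs
        rw [hk] at hgs
        have : (2*k : ℤ) = 2*k1 + 1 := by
          have : (2*(k:ℝ)) = 2*k1 + 1 := by linarith
          exact_mod_cast this
        omega
      · have hy : ((k0:ℝ) + 1/2) ∈ Set.Icc (g 0) (g 1) := by
          rw [hg0, hg1]
          constructor
          · linarith
          · have : (k0:ℝ) + 1 ≤ k1 := by exact_mod_cast hlt
            linarith
        obtain ⟨s, hs, hgs⟩ := intermediate_value_Icc zero_le_one hgcont hy
        obtain ⟨k, hk⟩ := hgint s hs
        rw [hk] at hgs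
        have : (2*k : ℤ) = 2*k0 + 1 := by
          have : (2*(k:ℝ)) = 2*k0 + 1 := by linarith
          exact_mod_cast this
        omega
    rw [hk0, hk1, hkk]
    ring
  rw [hΦθ]
  have hΦdiff : Φ 1 - Φ 0 =
      (q.roots.map (fun r =>
        Complex.arg (((1:ℝ):ℂ) - r) - Complex.arg (((0:ℝ):ℂ) - r))).sum := by
    rw [hΦ]
    simp only []
    rw [Multiset.sum_map_sub]
    ring
  rw [hΦdiff]
  calc |(q.roots.map (fun r =>
        Complex.arg (((1:ℝ):ℂ) - r) - Complex.arg (((0:ℝ):ℂ) - r))).sum|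
      ≤ Real.pi * (Multiset.card q.roots) :=
        aux_sum_bound _ _ fun r hr => (aux_arg r (hroots r hr)).2
    _ ≤ Real.pi * P.totalDegree := by
        rw [hcard]
        have := aux_deg n P z
        rw [← hq] at this
        exact mul_le_mul_of_nonneg_left (by exact_mod_cast this) Real.pi_pos.le
end

section
/- Under the hypotheses of the previous functional equation F(−s) = η^{−1} e^{(ξ·ℓ)s} G(s), all zeros of F and of G lie on the imaginary axis: if F(s) = 0 then Re(s) = 0. -/
theorem stmt_16 (n : ℕ) (P Q : MvPolynomial (Fin n) ℂ) (η : ℂ) (ℓ : Fin n → ℕ)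
    (hP : ∀ z : Fin n → ℂ, (∀ j, ‖z j‖ < 1) → MvPolynomial.eval z P ≠ 0)
    (hQ : ∀ z : Fin n → ℂ, (∀ j, ‖z j‖ < 1) → MvPolynomial.eval z Q ≠ 0)
    (hfe : ∀ z : Fin n → ℂ, (∀ j, z j ≠ 0) →
      MvPolynomial.eval z Q =
        η * (∏ j, z j ^ ℓ j) * MvPolynomial.eval (fun j => (z j)⁻¹) P)
    (hP0 : MvPolynomial.eval (0 : Fin n → ℂ) P = 1)
    (hQ0 : MvPolynomial.eval (0 : Fin n → ℂ) Q = 1)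
    (ξ : Fin n → ℝ) (hξ : ∀ j, 0 < ξ j) :
    (∀ s : ℂ, MvPolynomial.eval (fun j => Complex.exp (-(ξ j : ℂ) * s)) P = 0 → s.re = 0) ∧
    (∀ s : ℂ, MvPolynomial.eval (fun j => Complex.exp (-(ξ j : ℂ) * s)) Q = 0 → s.re = 0) := by
  have hlt : ∀ s : ℂ, 0 < s.re → ∀ j, ‖Complex.exp (-(ξ j : ℂ) * s)‖ < 1 := by
    intro s hs j
    rw [Complex.norm_exp]
    have : (-(ξ j : ℂ) * s).re = -(ξ j) * s.re := by simp [Complex.mul_re]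
    rw [this, Real.exp_lt_one_iff]
    nlinarith [hξ j]
  have hη : η ≠ 0 := by
    intro h0
    apply hQ (fun _ => 1/2) (by intro j; norm_num)
    rw [hfe (fun _ => 1/2) (by intro j; norm_num), h0]
    ring
  have hinv : ∀ s : ℂ, (fun j => (Complex.exp (-(ξ j : ℂ) * s))⁻¹)
      = fun j => Complex.exp (-(ξ j : ℂ) * (-s)) := by
    intro s; funext j; rw [← Complex.exp_neg]; congr 1; ring
  constructor
  · intro s hFs
    by_contra hre
    rcases lt_or_gt_of_ne hre with hlt' | hgt
    · have heq := hfe (fun j => Complex.exp (-(ξ j : ℂ) * (-s)))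
        (fun j => Complex.exp_ne_zero _)
    -- (exp(-ξ(-s)))⁻¹ = exp(-ξ s)
      have h2 : (fun j => (Complex.exp (-(ξ j : ℂ) * (-s)))⁻¹)
          = fun j => Complex.exp (-(ξ j : ℂ) * s) := by
        funext j; rw [← Complex.exp_neg]; congr 1; ring
      rw [h2, hFs, mul_zero] at heq
      exact hQ _ (hlt (-s) (by simpa using hlt')) heq
    · exact hP _ (hlt s hgt) hFs
  · intro s hGs
    by_contra hre
    rcases lt_or_gt_of_ne hre with hlt' | hgt
    · have hz : ∀ j, Complex.exp (-(ξ j : ℂ) * s) ≠ 0 := fun j => Complex.exp_ne_zero _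
      have heq := hfe _ hz
      rw [hGs] at heq
      have hprod : (∏ j, Complex.exp (-(ξ j : ℂ) * s) ^ ℓ j) ≠ 0 :=
        Finset.prod_ne_zero_iff.mpr (fun j _ => pow_ne_zero _ (hz j))
      have hPne : MvPolynomial.eval (fun j => (Complex.exp (-(ξ j : ℂ) * s))⁻¹) P ≠ 0 := by
        rw [hinv s]
        exact hP _ (hlt (-s) (by simpa using hlt'))
      exact (mul_ne_zero (mul_ne_zero hη hprod) hPne) heq.symm
    · exact hQ _ (hlt s hgt) hGs
end

section
/- Let ξ₁, ξ₂ > 0 with ξ₁/ξ₂ irrational. Then the set {(γξ₁ mod 2π, γξ₂ mod 2π) : γ ∈ ℝ, 3 sin((ξ₁/2+ξ₂)γ) + sin((ξ₁/2−ξ₂)γ) = 0} is infinite (as a subset of the torus ℝ²/(2πℤ)²). -/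
open Real Set

theorem stmt_17 (ξ₁ ξ₂ : ℝ) (hξ₁ : 0 < ξ₁) (hξ₂ : 0 < ξ₂) (hirr : Irrational (ξ₁ / ξ₂)) :
    {p : AddCircle (2 * Real.pi) × AddCircle (2 * Real.pi) |
      ∃ γ : ℝ, 3 * Real.sin ((ξ₁ / 2 + ξ₂) * γ) + Real.sin ((ξ₁ / 2 - ξ₂) * γ) = 0 ∧
        p = (↑(γ * ξ₁), ↑(γ * ξ₂))}.Infinite := by
  set a : ℝ := ξ₁ / 2 + ξ₂ with ha_def
  set b : ℝ := ξ₁ / 2 - ξ₂ with hb_def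
  have ha : 0 < a := by positivity
  set f : ℝ → ℝ := fun γ => 3 * Real.sin (a * γ) + Real.sin (b * γ) with hf_def
  have hcont : Continuous f := by fun_prop
  -- endpoints
  set L : ℕ → ℝ := fun k => (4 * k + 1) * π / (2 * a) with hL_def
  set R : ℕ → ℝ := fun k => (4 * k + 3) * π / (2 * a) with hR_def
  have haL : ∀ k, a * L k = π / 2 + (k : ℝ) * (2 * π) := by
    intro k; simp only [hL_def]; field_simp; ring
  have haR : ∀ k, a * R k = π / 2 + π + (k : ℝ) * (2 * π) := by
    intro k; simp only [hR_def]; field_simp; ring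
  have hfL : ∀ k, 0 < f (L k) := by
    intro k
    have : Real.sin (a * L k) = 1 := by
      rw [haL k]
      rw [Real.sin_add_nat_mul_two_pi, Real.sin_pi_div_two]
    simp only [hf_def, this]
    nlinarith [Real.neg_one_le_sin (b * L k)]
  have hfR : ∀ k, f (R k) < 0 := by
    intro k
    have : Real.sin (a * R k) = -1 := by
      rw [haR k]
      rw [Real.sin_add_nat_mul_two_pi, Real.sin_add_pi, Real.sin_pi_div_two]
    simp only [hf_def, this]
    nlinarith [Real.sin_le_one (b * R k)]
  have hLR : ∀ k, L k < R k := by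
    intro k
    apply div_lt_div_of_pos_right _ (by positivity)
    nlinarith [Real.pi_pos]
  -- zeros via IVT
  have hzero : ∀ k : ℕ, ∃ γ ∈ Icc (L k) (R k), f γ = 0 := by
    intro k
    have h0 : (0 : ℝ) ∈ Icc (f (R k)) (f (L k)) := ⟨(hfR k).le, (hfL k).le⟩
    have := intermediate_value_Icc' (hLR k).le (hcont.continuousOn) h0
    obtain ⟨γ, hγ, hγ0⟩ := this
    exact ⟨γ, hγ, hγ0⟩
  choose γ hγmem hγzero using hzero
  -- γ is strictly monotone
  have hRL : ∀ k : ℕ, R k < L (k + 1) := by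
    intro k
    apply div_lt_div_of_pos_right _ (by positivity)
    push_cast
    nlinarith [Real.pi_pos]
  have hγmono : StrictMono γ := by
    apply strictMono_nat_of_lt_succ
    intro k
    calc γ k ≤ R k := (hγmem k).2
    _ < L (k + 1) := hRL k
    _ ≤ γ (k + 1) := (hγmem (k + 1)).1
  -- the torus map is injective on distinct reals
  have hπ : (2 : ℝ) * π ≠ 0 := by positivity
  have key : ∀ s t : ℝ, s ≠ t →
      ((↑(s * ξ₁), ↑(s * ξ₂)) : AddCircle (2 * π) × AddCircle (2 * π)) ≠ (↑(t * ξ₁), ↑(t * ξ₂)) := by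
    intro s t hst heq
    rw [Prod.mk.injEq] at heq
    obtain ⟨h1, h2⟩ := heq
    rw [QuotientAddGroup.eq_iff_sub_mem, AddSubgroup.mem_zmultiples_iff] at h1 h2
    obtain ⟨m, hm⟩ := h1
    obtain ⟨n, hn⟩ := h2
    rw [zsmul_eq_mul] at hm hn
    have hd : s - t ≠ 0 := sub_ne_zero.mpr hst
    have hn0 : (n : ℝ) ≠ 0 := by
      intro h
      apply hd
      have : s * ξ₂ - t * ξ₂ = 0 := by rw [← hn, h]; ring
      have : (s - t) * ξ₂ = 0 := by linarith [this]
      exact (mul_eq_zero.mp this).resolve_right hξ₂.ne'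
    apply hirr
    refine ⟨(m : ℚ) / (n : ℚ), ?_⟩
    push_cast
    have hsm : (s - t) * ξ₁ = m * (2 * π) := by linarith [hm]
    have hsn : (s - t) * ξ₂ = n * (2 * π) := by linarith [hn]
    rw [div_eq_div_iff (by intro h; exact hn0 (by exact_mod_cast h) : (n:ℝ) ≠ 0) hξ₂.ne']
    have h2 : (m : ℝ) * ξ₂ * (2 * π) = ξ₁ * n * (2 * π) := by
      linear_combination ξ₁ * hsn - ξ₂ * hsm
    exact mul_right_cancel₀ hπ h2
  -- conclude
  apply Set.infinite_of_injective_forall_mem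
    (f := fun k : ℕ => ((↑(γ k * ξ₁), ↑(γ k * ξ₂)) : AddCircle (2 * π) × AddCircle (2 * π)))
  · intro i j hij
    by_contra hne
    exact key (γ i) (γ j) (hγmono.injective.ne hne) hij
  · intro k
    exact ⟨γ k, hγzero k, rfl⟩
end
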